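/- Let Z be a real d×d matrix, σ a real antisymmetric d×d matrix, and ψ : ℝ^d → ℂ continuous. Define f_t(ξ) := exp( ∫₀ᵗ ψ(exp(τZ) ξ) dτ ) for t ≥ 0, ξ ∈ ℝ^d. Assume that for every t ≥ 0, f_t is twisted positive definite with respect to σ − exp(tZᵀ) σ exp(tZ). Then for every N, all ξ¹,…,ξᴺ ∈ ℝ^d, every c ∈ ℂ^N with ∑_{k=1}^N c_k = 0, and each choice of sign ±, the sum ∑_{k,l=1}^N conj(c_k) · ( ψ(ξ^l − ξ^k) ± (i/2) (ξ^k)ᵀ (σZ + Zᵀσ) ξ^l ) · c_l is a nonnegative real number. -/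

import Mathlib

open MeasureTheory Matrix Filter ComplexOrder

/-- The matrix semigroup `S_t = exp (t Z)` generated by a real `d × d` matrix `Z`. -/
noncomputable def expm {d : ℕ} (Z : Matrix (Fin d) (Fin d) ℝ) (t : ℝ) :
    Matrix (Fin d) (Fin d) ℝ :=
  NormedSpace.exp (t • Z)

/-- The Euclidean norm on `ℝ^d`. -/
noncomputable def eucNorm {d : ℕ} (x : Fin d → ℝ) : ℝ :=
  Real.sqrt (∑ i, x i ^ 2)

/-- The characteristic function of a measure on `ℝ^d`. -/
noncomputable def charFun {d : ℕ} (μ : Measure (Fin d → ℝ)) (ξ : Fin d → ℝ) : ℂ :=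
  ∫ x, Complex.exp (Complex.I * ((x ⬝ᵥ ξ : ℝ) : ℂ)) ∂μ

/-- Convolution of two measures on `ℝ^d`. -/
noncomputable def mconv {d : ℕ} (μ ρ : Measure (Fin d → ℝ)) : Measure (Fin d → ℝ) :=
  (μ.prod ρ).map fun p => p.1 + p.2

/-- The `m`-fold convolution power of a measure on `ℝ^d`. -/
noncomputable def convPow {d : ℕ} (ρ : Measure (Fin d → ℝ)) : ℕ → Measure (Fin d → ℝ)
  | 0 => Measure.dirac 0
  | n + 1 => mconv ρ (convPow ρ n)

/-- A probability measure on `ℝ^d` is infinitely divisible if for every `m ≥ 1` it is an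
`m`-fold convolution power of some probability measure. -/
def InfinitelyDivisible {d : ℕ} (μ : Measure (Fin d → ℝ)) : Prop :=
  ∀ m : ℕ, 1 ≤ m → ∃ ρ : Measure (Fin d → ℝ), IsProbabilityMeasure ρ ∧ convPow ρ m = μ

/-- `g : ℝ^d → ℂ` is twisted positive definite with respect to the antisymmetric form `Δ`. -/
def TwistedPosDef {d : ℕ} (Δ : Matrix (Fin d) (Fin d) ℝ) (g : (Fin d → ℝ) → ℂ) : Prop :=
  ∀ (N : ℕ) (ξ : Fin N → (Fin d → ℝ)) (c : Fin N → ℂ),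
    0 ≤ ∑ k : Fin N, ∑ l : Fin N, (starRingEnd ℂ) (c k) * g (ξ l - ξ k) *
      Complex.exp (Complex.I / 2 * (((ξ k) ⬝ᵥ (Δ.mulVec (ξ l)) : ℝ) : ℂ)) * c l

/-- A Lévy measure on `ℝ^d`. -/
def IsLevyMeasure {d : ℕ} (ν : Measure (Fin d → ℝ)) : Prop :=
  ν {0} = 0 ∧
  (∫⁻ η in {η : Fin d → ℝ | eucNorm η < 1}, ENNReal.ofReal (eucNorm η ^ 2) ∂ν) < ⊤ ∧
  ν {η : Fin d → ℝ | 1 ≤ eucNorm η} < ⊤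

/-- The Lévy symbol associated to a generating triplet `(A, ν, α)`. -/
noncomputable def levySymbol {d : ℕ} (α : Fin d → ℝ) (A : Matrix (Fin d) (Fin d) ℝ)
    (ν : Measure (Fin d → ℝ)) (ξ : Fin d → ℝ) : ℂ :=
  Complex.I * ((α ⬝ᵥ ξ : ℝ) : ℂ) - (1 / 2 : ℂ) * ((ξ ⬝ᵥ (A.mulVec ξ) : ℝ) : ℂ) +
    ∫ η, (Complex.exp (Complex.I * ((η ⬝ᵥ ξ : ℝ) : ℂ)) - 1 -
      Complex.I * ((({η : Fin d → ℝ | eucNorm η < 1}).indicator (fun η' => η' ⬝ᵥ ξ) η : ℝ) : ℂ)) ∂ν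

/-- `Ψ` admits the Lévy–Khinchine representation with generating triplet `(A, ν, α)`. -/
def HasTriplet {d : ℕ} (Ψ : (Fin d → ℝ) → ℂ) (A : Matrix (Fin d) (Fin d) ℝ)
    (ν : Measure (Fin d → ℝ)) (α : Fin d → ℝ) : Prop :=
  A.IsSymm ∧ A.PosSemidef ∧ ν {0} = 0 ∧
  (∫⁻ η, ENNReal.ofReal (min (eucNorm η ^ 2) 1) ∂ν) < ⊤ ∧
  ∀ ξ, Ψ ξ = levySymbol α A ν ξ

lemma expm_zero {d : ℕ} (Z : Matrix (Fin d) (Fin d) ℝ) : expm Z 0 = 1 := by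
  simp [expm]

lemma hasDerivAt_quad {d : ℕ} (Z σ : Matrix (Fin d) (Fin d) ℝ) (v w : Fin d → ℝ) :
    HasDerivAt (fun t : ℝ => v ⬝ᵥ (((expm Z t)ᵀ * σ * expm Z t).mulVec w))
      (v ⬝ᵥ ((Zᵀ * σ + σ * Z).mulVec w)) 0 := by
  letI : NormedRing (Matrix (Fin d) (Fin d) ℝ) := Matrix.linftyOpNormedRing
  letI : NormedAlgebra ℝ (Matrix (Fin d) (Fin d) ℝ) := Matrix.linftyOpNormedAlgebra
  letI : CompleteSpace (Matrix (Fin d) (Fin d) ℝ) := FiniteDimensional.complete ℝ _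
  have hE : HasDerivAt (fun t : ℝ => expm Z t) Z 0 := by
    have h := hasDerivAt_exp_smul_const (𝕂 := ℝ) Z 0
    rw [zero_smul, NormedSpace.exp_zero, one_mul] at h
    exact h
  have hT : HasDerivAt (fun t : ℝ => (expm Z t)ᵀ) Zᵀ 0 := by
    have := ((Matrix.transposeLinearEquiv (Fin d) (Fin d) ℝ
      ℝ).toLinearMap.toContinuousLinearMap).hasFDerivAt.comp_hasDerivAt 0 hE
    exact this
  have hP : HasDerivAt (fun t : ℝ => (expm Z t)ᵀ * σ * expm Z t) (Zᵀ * σ + σ * Z) 0 := by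
    have := (hT.mul_const σ).mul hE
    simp only [expm_zero, Matrix.transpose_one, Matrix.one_mul, Matrix.mul_one] at this
    exact this
  let L : Matrix (Fin d) (Fin d) ℝ →ₗ[ℝ] ℝ :=
    { toFun := fun A => v ⬝ᵥ A.mulVec w
      map_add' := fun A B => by simp [Matrix.add_mulVec, dotProduct_add]
      map_smul' := fun r A => by simp [Matrix.smul_mulVec] }
  exact L.toContinuousLinearMap.hasFDerivAt.comp_hasDerivAt 0 hP

lemma continuous_expm {d : ℕ} (Z : Matrix (Fin d) (Fin d) ℝ) : Continuous (expm Z) := by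
  letI : NormedRing (Matrix (Fin d) (Fin d) ℝ) := Matrix.linftyOpNormedRing
  letI : NormedAlgebra ℝ (Matrix (Fin d) (Fin d) ℝ) := Matrix.linftyOpNormedAlgebra
  letI : CompleteSpace (Matrix (Fin d) (Fin d) ℝ) := FiniteDimensional.complete ℝ _
  refine continuous_iff_continuousAt.2 fun t => ?_
  have h := hasDerivAt_exp_smul_const (𝕂 := ℝ) Z t
  exact h.continuousAt

lemma tpd_neg {d : ℕ} {Δ : Matrix (Fin d) (Fin d) ℝ} (hΔ : Δᵀ = -Δ)
    {g : (Fin d → ℝ) → ℂ} (h : TwistedPosDef Δ g) : TwistedPosDef (-Δ) g := by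
  intro N ξ c
  have h2 := h N (fun k => -ξ k) (fun k => (starRingEnd ℂ) (c k))
  refine le_of_le_of_eq h2 ?_
  rw [Finset.sum_comm]
  refine Finset.sum_congr rfl fun k _ => Finset.sum_congr rfl fun l _ => ?_
  have hdot : (-ξ l) ⬝ᵥ Δ.mulVec (-ξ k) = ξ k ⬝ᵥ (-Δ).mulVec (ξ l) := by
    rw [Matrix.mulVec_neg, dotProduct_neg, neg_dotProduct, neg_neg,
      Matrix.dotProduct_mulVec, ← Matrix.mulVec_transpose, hΔ, dotProduct_comm]
  rw [hdot]
  simp only [Complex.conj_conj, neg_sub_neg]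
  ring

open scoped Topology in
lemma isClosed_nonneg_complex : IsClosed {z : ℂ | 0 ≤ z} := by
  have h : {z : ℂ | 0 ≤ z} = {z : ℂ | 0 ≤ z.re} ∩ {z : ℂ | 0 = z.im} := by
    ext z; simp [Complex.le_def]
  rw [h]
  exact (isClosed_le continuous_const Complex.continuous_re).inter
    (isClosed_eq continuous_const Complex.continuous_im)

open scoped Topology in
lemma key {d : ℕ} (Z : Matrix (Fin d) (Fin d) ℝ) (ψ : (Fin d → ℝ) → ℂ) (hψcont : Continuous ψ)
    (Δ : ℝ → Matrix (Fin d) (Fin d) ℝ) (D : Matrix (Fin d) (Fin d) ℝ)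
    (hΔ0 : Δ 0 = 0)
    (hD : ∀ v w : Fin d → ℝ, HasDerivAt (fun t => v ⬝ᵥ ((Δ t).mulVec w)) (v ⬝ᵥ D.mulVec w) 0)
    (htw : ∀ t : ℝ, 0 ≤ t → TwistedPosDef (Δ t)
      (fun ξ => Complex.exp (∫ τ in (0:ℝ)..t, ψ ((expm Z τ).mulVec ξ))))
    (N : ℕ) (ξ : Fin N → (Fin d → ℝ)) (c : Fin N → ℂ) (hc : ∑ k, c k = 0) :
    0 ≤ ∑ k : Fin N, ∑ l : Fin N, (starRingEnd ℂ) (c k) *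
        (ψ (ξ l - ξ k) + Complex.I / 2 * ((ξ k ⬝ᵥ D.mulVec (ξ l) : ℝ) : ℂ)) * c l := by
  set F : ℝ → ℂ := fun t => ∑ k : Fin N, ∑ l : Fin N, (starRingEnd ℂ) (c k) *
      Complex.exp (∫ τ in (0:ℝ)..t, ψ ((expm Z τ).mulVec (ξ l - ξ k))) *
      Complex.exp (Complex.I / 2 * ((ξ k ⬝ᵥ (Δ t).mulVec (ξ l) : ℝ) : ℂ)) * c l with hFdef
  set S : ℂ := ∑ k : Fin N, ∑ l : Fin N, (starRingEnd ℂ) (c k) *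
      (ψ (ξ l - ξ k) + Complex.I / 2 * ((ξ k ⬝ᵥ D.mulVec (ξ l) : ℝ) : ℂ)) * c l with hSdef
  have hF0 : F 0 = 0 := by
    have h1 : F 0 = (∑ k : Fin N, (starRingEnd ℂ) (c k)) * ∑ l : Fin N, c l := by
      rw [hFdef]
      simp only [intervalIntegral.integral_same, Complex.exp_zero, hΔ0, Matrix.zero_mulVec,
        dotProduct_zero, Complex.ofReal_zero, mul_zero, mul_one, one_mul]
      rw [Finset.sum_mul_sum]
    rw [h1, ← map_sum, hc, map_zero, zero_mul]
  have hFd : HasDerivAt F S 0 := by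
    rw [hFdef, hSdef]
    apply HasDerivAt.fun_sum
    intro k _
    apply HasDerivAt.fun_sum
    intro l _
    have hcont : Continuous fun τ : ℝ => ψ ((expm Z τ).mulVec (ξ l - ξ k)) :=
      hψcont.comp ((continuous_expm Z).matrix_mulVec continuous_const)
    have hA : HasDerivAt (fun t : ℝ => ∫ τ in (0:ℝ)..t, ψ ((expm Z τ).mulVec (ξ l - ξ k)))
        (ψ ((expm Z 0).mulVec (ξ l - ξ k))) 0 :=
      intervalIntegral.integral_hasDerivAt_right (hcont.intervalIntegrable _ _)
        (hcont.stronglyMeasurableAtFilter _ _) hcont.continuousAt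
    have hB : HasDerivAt (fun t : ℝ => Complex.I / 2 * ((ξ k ⬝ᵥ (Δ t).mulVec (ξ l) : ℝ) : ℂ))
        (Complex.I / 2 * ((ξ k ⬝ᵥ D.mulVec (ξ l) : ℝ) : ℂ)) 0 :=
      ((hD (ξ k) (ξ l)).ofReal_comp).const_mul (Complex.I / 2)
    have hterm := (((hA.cexp).const_mul ((starRingEnd ℂ) (c k))).mul hB.cexp).mul_const (c l)
    convert hterm using 1
    case e'_4 => rfl
    · rfl
    rw [intervalIntegral.integral_same, expm_zero, Matrix.one_mulVec, hΔ0]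
    simp only [Matrix.zero_mulVec, dotProduct_zero, Complex.ofReal_zero, mul_zero,
      Complex.exp_zero]
    ring
  have hslope : Tendsto (fun t : ℝ => t⁻¹ • F t) (𝓝[>] (0:ℝ)) (𝓝 S) := by
    have h1 := hasDerivAt_iff_tendsto_slope.mp hFd
    have h2 : Tendsto (slope F 0) (𝓝[>] (0:ℝ)) (𝓝 S) :=
      h1.mono_left (nhdsWithin_mono _ fun x hx => ne_of_gt hx)
    refine h2.congr' ?_
    filter_upwards [self_mem_nhdsWithin] with t ht
    rw [slope_def_module, hF0, sub_zero, sub_zero]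
  have hmem : ∀ᶠ t in 𝓝[>] (0:ℝ), (fun t : ℝ => t⁻¹ • F t) t ∈ {z : ℂ | 0 ≤ z} := by
    filter_upwards [self_mem_nhdsWithin] with t ht
    have hFt : (0:ℂ) ≤ F t := htw t (le_of_lt ht) N ξ c
    have : (0:ℂ) ≤ ((t⁻¹ : ℝ) : ℂ) * F t :=
      mul_nonneg (Complex.zero_le_real.mpr (inv_nonneg.mpr (le_of_lt ht))) hFt
    simpa [Complex.real_smul] using this
  exact isClosed_nonneg_complex.mem_of_tendsto hslope hmem


/-- twisted positive definiteness of `f_t(ξ) = exp(∫₀ᵗ ψ(S_τ ξ) dτ)` implies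
the conditional positive definiteness of `ψ(ξ) ± (i/2) ξᵀ(σZ + Zᵀσ)ξ`. -/
theorem stmt12 (d : ℕ) (hd : 0 < d) (Z σ : Matrix (Fin d) (Fin d) ℝ) (hσ : σᵀ = -σ)
    (ψ : (Fin d → ℝ) → ℂ) (hψcont : Continuous ψ)
    (htw : ∀ t : ℝ, 0 ≤ t →
      TwistedPosDef (σ - (expm Z t)ᵀ * σ * expm Z t)
        (fun ξ => Complex.exp (∫ τ in (0:ℝ)..t, ψ ((expm Z τ).mulVec ξ)))) :
    ∀ (N : ℕ) (ξ : Fin N → (Fin d → ℝ)) (c : Fin N → ℂ), (∑ k : Fin N, c k = 0) →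
      (0 ≤ ∑ k : Fin N, ∑ l : Fin N, (starRingEnd ℂ) (c k) *
          (ψ (ξ l - ξ k) + Complex.I / 2 *
            (((ξ k) ⬝ᵥ ((σ * Z + Zᵀ * σ).mulVec (ξ l)) : ℝ) : ℂ)) * c l) ∧
      (0 ≤ ∑ k : Fin N, ∑ l : Fin N, (starRingEnd ℂ) (c k) *
          (ψ (ξ l - ξ k) - Complex.I / 2 *
            (((ξ k) ⬝ᵥ ((σ * Z + Zᵀ * σ).mulVec (ξ l)) : ℝ) : ℂ)) * c l) := by
  intro N ξ c hc
  set Δ : ℝ → Matrix (Fin d) (Fin d) ℝ := fun t => σ - (expm Z t)ᵀ * σ * expm Z t with hΔdef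
  have hΔ0 : Δ 0 = 0 := by
    simp [hΔdef, expm_zero]
  have hΔanti : ∀ t : ℝ, (Δ t)ᵀ = -(Δ t) := by
    intro t
    simp only [hΔdef, Matrix.transpose_sub, Matrix.transpose_mul, Matrix.transpose_transpose,
      hσ, Matrix.neg_mul, Matrix.mul_neg, neg_sub]
    rw [Matrix.mul_assoc]
    abel
  have hDm : ∀ v w : Fin d → ℝ, HasDerivAt (fun t : ℝ => v ⬝ᵥ ((Δ t).mulVec w))
      (v ⬝ᵥ ((-(Zᵀ * σ + σ * Z)).mulVec w)) 0 := by
    intro v w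
    have h2 := (hasDerivAt_quad Z σ v w).const_sub (v ⬝ᵥ σ.mulVec w)
    have hfun : (fun t : ℝ => v ⬝ᵥ σ.mulVec w - v ⬝ᵥ (((expm Z t)ᵀ * σ * expm Z t).mulVec w))
        = fun t : ℝ => v ⬝ᵥ ((Δ t).mulVec w) := by
      funext t
      rw [hΔdef]
      simp [Matrix.sub_mulVec, dotProduct_sub]
    rw [hfun] at h2
    have hval : -(v ⬝ᵥ (Zᵀ * σ + σ * Z).mulVec w) = v ⬝ᵥ ((-(Zᵀ * σ + σ * Z)).mulVec w) := by
      simp [Matrix.neg_mulVec, Matrix.add_mulVec, dotProduct_neg, dotProduct_add]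
    rwa [hval] at h2
  have hDp : ∀ v w : Fin d → ℝ, HasDerivAt (fun t : ℝ => v ⬝ᵥ ((-(Δ t)).mulVec w))
      (v ⬝ᵥ ((Zᵀ * σ + σ * Z).mulVec w)) 0 := by
    intro v w
    have h2 := (hDm v w).fun_neg
    have hfun : (fun t : ℝ => -(v ⬝ᵥ ((Δ t).mulVec w)))
        = fun t : ℝ => v ⬝ᵥ ((-(Δ t)).mulVec w) := by
      funext t; simp [Matrix.neg_mulVec, dotProduct_neg]
    rw [hfun] at h2
    have hval : -(v ⬝ᵥ ((-(Zᵀ * σ + σ * Z)).mulVec w)) = v ⬝ᵥ ((Zᵀ * σ + σ * Z).mulVec w) := by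
      simp [Matrix.neg_mulVec, Matrix.add_mulVec, dotProduct_neg, dotProduct_add]
    rwa [hval] at h2
  have hMcomm : Zᵀ * σ + σ * Z = σ * Z + Zᵀ * σ := add_comm _ _
  constructor
  · -- plus sign : use -Δ
    have hk := key Z ψ hψcont (fun t => -(Δ t)) (Zᵀ * σ + σ * Z)
      (by simp [hΔ0]) hDp
      (fun t ht => tpd_neg (hΔanti t) (htw t ht)) N ξ c hc
    rw [hMcomm] at hk
    exact hk
  · -- minus sign
    have hk := key Z ψ hψcont Δ (-(Zᵀ * σ + σ * Z)) hΔ0 hDm (fun t ht => htw t ht) N ξ c hc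
    refine le_of_le_of_eq hk ?_
    refine Finset.sum_congr rfl fun k _ => Finset.sum_congr rfl fun l _ => ?_
    rw [hMcomm]
    have heq : Complex.I / 2 * ((ξ k ⬝ᵥ (-(σ * Z + Zᵀ * σ)).mulVec (ξ l) : ℝ) : ℂ)
        = -(Complex.I / 2 * ((ξ k ⬝ᵥ (σ * Z + Zᵀ * σ).mulVec (ξ l) : ℝ) : ℂ)) := by
      rw [Matrix.neg_mulVec, dotProduct_neg, Complex.ofReal_neg]; ring
    rw [heq, ← sub_eq_add_neg]
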